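/- Suppose ‖[Â, B̂] − [A, B]‖_op ≤ ε with ε ≤ (max_{ω∈[0,2π]} 2‖(e^{iω}I − A)⁻¹‖_op)⁻¹, and let U_ℓ ⪰ 0 be Hermitian matrices with Σ_{ℓ=1}^k tr(U_ℓ) ≤ k² γ². Then the difference of frequency-domain Gramians (1/k)‖Σ_ℓ (e^{iω_ℓ}I − Â)⁻¹ B̂ U_ℓ B̂ᴴ (e^{iω_ℓ}I − Â)⁻ᴴ − Σ_ℓ (e^{iω_ℓ}I − A)⁻¹ B U_ℓ Bᴴ (e^{iω_ℓ}I − A)⁻ᴴ‖_op is bounded by C₁ε + C₂ε² + C₃ε³, where C₁ = max_ω kγ² ‖(e^{iω}I−A)⁻¹‖_op² ‖B‖_op (16‖(e^{iω}I−A)⁻¹‖_op‖B‖_op + 2), C₂ = max_ω kγ² ‖(e^{iω}I−A)⁻¹‖_op² (32‖(e^{iω}I−A)⁻¹‖_op‖B‖_op + 2), and C₃ = max_ω 16 kγ² ‖(e^{iω}I−A)⁻¹‖_op³. -/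

import Mathlib

open Matrix
open scoped ComplexOrder

/-- The ℓ₂ → ℓ₂ operator (spectral) norm of a matrix. -/
noncomputable def opNorm {𝕜 : Type*} [RCLike 𝕜] {m n : Type*} [Fintype m] [Fintype n]
    [DecidableEq n] (M : Matrix m n 𝕜) : ℝ :=
  ‖(Matrix.toEuclideanLin M).toContinuousLinearMap‖

open scoped Matrix.Norms.L2Operator

set_option linter.unusedSectionVars false

namespace FreqAux

variable {m n l : Type*} [Fintype m] [Fintype n] [Fintype l] [DecidableEq n] [DecidableEq m]

lemma opNorm_eq (M : Matrix m n ℂ) : opNorm M = ‖M‖ := (Matrix.l2_opNorm_def M).symm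


lemma norm_le_of_bound (M : Matrix m n ℂ) {c : ℝ} (hc : 0 ≤ c)
    (h : ∀ v : EuclideanSpace ℂ n,
      ‖((WithLp.equiv 2 (m → ℂ)).symm (M *ᵥ (WithLp.equiv 2 (n → ℂ)) v) : EuclideanSpace ℂ m)‖
        ≤ c * ‖v‖) : ‖M‖ ≤ c := by
  rw [Matrix.l2_opNorm_def]
  refine ContinuousLinearMap.opNorm_le_bound _ hc fun v => ?_
  simpa [Matrix.toEuclideanLin_apply] using h v

lemma norm_one_le : ‖(1 : Matrix n n ℂ)‖ ≤ 1 := by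
  refine norm_le_of_bound _ zero_le_one fun v => ?_
  simp [Matrix.one_mulVec]

lemma norm_unitary {V : Matrix n n ℂ} (hV : Vᴴ * V = 1) : ‖V‖ ≤ 1 := by
  have h1 : ‖V‖ * ‖V‖ ≤ 1 := by
    rw [← Matrix.l2_opNorm_conjTranspose_mul_self, hV]
    exact norm_one_le
  nlinarith [norm_nonneg V]

lemma norm_diagonal_le {v : n → ℝ} (h : ∀ i, 0 ≤ v i) :
    ‖(Matrix.diagonal ((RCLike.ofReal : ℝ → ℂ) ∘ v))‖ ≤ ∑ i, v i := by
  have hc : (0:ℝ) ≤ ∑ i, v i := Finset.sum_nonneg fun i _ => h i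
  refine norm_le_of_bound _ hc fun x => ?_
  have hnorm : ∀ y : EuclideanSpace ℂ n, ‖y‖ = Real.sqrt (∑ i, ‖y i‖ ^ 2) := fun y => by
    rw [EuclideanSpace.norm_eq]
  rw [hnorm, hnorm]
  have hb : ∀ i : n,
      ‖((WithLp.equiv 2 (n → ℂ)).symm
          (Matrix.diagonal ((RCLike.ofReal : ℝ → ℂ) ∘ v) *ᵥ (WithLp.equiv 2 (n → ℂ)) x) :
        EuclideanSpace ℂ n) i‖ ^ 2 ≤ (∑ j, v j) ^ 2 * ‖x i‖ ^ 2 := by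
    intro i
    have : ((WithLp.equiv 2 (n → ℂ)).symm
          (Matrix.diagonal ((RCLike.ofReal : ℝ → ℂ) ∘ v) *ᵥ (WithLp.equiv 2 (n → ℂ)) x) :
        EuclideanSpace ℂ n) i = (RCLike.ofReal (v i) : ℂ) * x i := by
      simp [Matrix.mulVec_diagonal]
    rw [this, norm_mul, RCLike.norm_ofReal, abs_of_nonneg (h i)]
    have h2 : v i ≤ ∑ j, v j := Finset.single_le_sum (fun j _ => h j) (Finset.mem_univ i)
    have h3 : (0:ℝ) ≤ ‖x i‖ := norm_nonneg _
    nlinarith [mul_self_le_mul_self (h i) h2, sq_nonneg (‖x i‖)]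
  calc Real.sqrt (∑ i, ‖((WithLp.equiv 2 (n → ℂ)).symm
          (Matrix.diagonal ((RCLike.ofReal : ℝ → ℂ) ∘ v) *ᵥ (WithLp.equiv 2 (n → ℂ)) x) :
        EuclideanSpace ℂ n) i‖ ^ 2)
      ≤ Real.sqrt ((∑ j, v j) ^ 2 * ∑ i, ‖x i‖ ^ 2) := by
        apply Real.sqrt_le_sqrt
        rw [Finset.mul_sum]
        exact Finset.sum_le_sum fun i _ => hb i
    _ = (∑ j, v j) * Real.sqrt (∑ i, ‖x i‖ ^ 2) := by
        rw [Real.sqrt_mul (sq_nonneg _), Real.sqrt_sq hc]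



lemma psd_norm_le {U : Matrix n n ℂ} (hU : U.PosSemidef) :
    ‖U‖ ≤ U.trace.re ∧ 0 ≤ U.trace.re := by
  have hH : U.IsHermitian := hU.1
  have hev : ∀ i, 0 ≤ hH.eigenvalues i := hU.eigenvalues_nonneg
  set V : Matrix n n ℂ := (Matrix.IsHermitian.eigenvectorUnitary hH : Matrix n n ℂ) with hVdef
  have hVu : star V * V = 1 := Matrix.mem_unitaryGroup_iff'.mp
    (Matrix.IsHermitian.eigenvectorUnitary hH).2
  have hspec := hH.spectral_theorem
  simp only [Unitary.conjStarAlgAut_apply, Unitary.coe_star] at hspec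
  have htr : U.trace.re = ∑ i, hH.eigenvalues i := by
    conv_lhs => rw [hspec]
    rw [Matrix.trace_mul_cycle, ← hVdef, hVu, one_mul, Matrix.trace_diagonal]
    rw [Complex.re_sum]
    simp
  have htr0 : 0 ≤ U.trace.re := htr ▸ Finset.sum_nonneg fun i _ => hev i
  refine ⟨?_, htr0⟩
  have hnV : ‖V‖ ≤ 1 := norm_unitary (by rw [← Matrix.star_eq_conjTranspose, hVu])
  have hnVs : ‖(star V : Matrix n n ℂ)‖ ≤ 1 := by
    rw [Matrix.star_eq_conjTranspose, Matrix.l2_opNorm_conjTranspose]; exact hnV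
  have hD : ‖(Matrix.diagonal ((RCLike.ofReal : ℝ → ℂ) ∘ hH.eigenvalues))‖
      ≤ ∑ i, hH.eigenvalues i := norm_diagonal_le hev
  calc ‖U‖ = ‖V * Matrix.diagonal ((RCLike.ofReal : ℝ → ℂ) ∘ hH.eigenvalues) * star V‖ := by
        conv_lhs => rw [hspec]
    _ ≤ ‖V * Matrix.diagonal ((RCLike.ofReal : ℝ → ℂ) ∘ hH.eigenvalues)‖ * ‖(star V : Matrix n n ℂ)‖ :=
        Matrix.l2_opNorm_mul _ _
    _ ≤ ‖V‖ * ‖(Matrix.diagonal ((RCLike.ofReal : ℝ → ℂ) ∘ hH.eigenvalues))‖ *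
          ‖(star V : Matrix n n ℂ)‖ := by
        have := Matrix.l2_opNorm_mul V (Matrix.diagonal ((RCLike.ofReal : ℝ → ℂ) ∘ hH.eigenvalues))
        exact mul_le_mul_of_nonneg_right this (norm_nonneg _)
    _ ≤ 1 * (∑ i, hH.eigenvalues i) * 1 := by
        have h0 : (0:ℝ) ≤ ∑ i, hH.eigenvalues i := Finset.sum_nonneg fun i _ => hev i
        have := mul_le_mul hnV hD (norm_nonneg _) zero_le_one
        exact mul_le_mul this hnVs (norm_nonneg _) (by nlinarith)
    _ = U.trace.re := by rw [htr]; ring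

lemma exp_I_sub_one_le (x : ℝ) : ‖Complex.exp ((x:ℂ) * Complex.I) - 1‖ ≤ |x| := by
  have hz : Complex.exp ((x:ℂ) * Complex.I) - 1
      = ((Real.cos x - 1 : ℝ) : ℂ) + ((Real.sin x : ℝ) : ℂ) * Complex.I := by
    rw [Complex.exp_mul_I]
    push_cast [Complex.ofReal_cos, Complex.ofReal_sin]
    ring
  have hsq : ‖Complex.exp ((x:ℂ) * Complex.I) - 1‖ ^ 2 = (Real.cos x - 1)^2 + (Real.sin x)^2 := by
    rw [hz, Complex.sq_norm, Complex.normSq_add_mul_I]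
  have h2 : ‖Complex.exp ((x:ℂ) * Complex.I) - 1‖ ^ 2 ≤ x ^ 2 := by
    rw [hsq]
    have := Real.sin_sq_add_cos_sq x
    have := Real.one_sub_sq_div_two_le_cos (x := x)
    nlinarith
  nlinarith [norm_nonneg (Complex.exp ((x:ℂ) * Complex.I) - 1), abs_nonneg x, sq_abs x]

lemma exp_I_sub_le (a b : ℝ) :
    ‖Complex.exp ((a:ℂ) * Complex.I) - Complex.exp ((b:ℂ) * Complex.I)‖ ≤ |a - b| := by
  have hfac : Complex.exp ((a:ℂ) * Complex.I) - Complex.exp ((b:ℂ) * Complex.I)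
      = Complex.exp ((b:ℂ) * Complex.I) * (Complex.exp (((a - b : ℝ):ℂ) * Complex.I) - 1) := by
    rw [mul_sub, ← Complex.exp_add, mul_one]
    push_cast
    ring_nf
  rw [hfac, norm_mul]
  have h1 : ‖Complex.exp ((b:ℂ) * Complex.I)‖ = 1 := Complex.norm_exp_ofReal_mul_I b
  rw [h1, one_mul]
  exact exp_I_sub_one_le (a - b)

lemma elim_norm_left {n₂ : Type*} [Fintype n₂] (v : EuclideanSpace ℂ n) :
    ‖((WithLp.equiv 2 ((n ⊕ n₂) → ℂ)).symm
        (Sum.elim ((WithLp.equiv 2 (n → ℂ)) v) 0) : EuclideanSpace ℂ (n ⊕ n₂))‖ = ‖v‖ := by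
  rw [EuclideanSpace.norm_eq, EuclideanSpace.norm_eq]
  congr 1
  rw [Fintype.sum_sum_type]
  simp

lemma elim_norm_right {n₂ : Type*} [Fintype n₂] (v : EuclideanSpace ℂ n₂) :
    ‖((WithLp.equiv 2 ((n ⊕ n₂) → ℂ)).symm
        (Sum.elim 0 ((WithLp.equiv 2 (n₂ → ℂ)) v)) : EuclideanSpace ℂ (n ⊕ n₂))‖ = ‖v‖ := by
  rw [EuclideanSpace.norm_eq, EuclideanSpace.norm_eq]
  congr 1
  rw [Fintype.sum_sum_type]
  simp

lemma norm_left_le_fromColumns {n₂ : Type*} [Fintype n₂] [DecidableEq n₂]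
    (X : Matrix m n ℂ) (Y : Matrix m n₂ ℂ) :
    ‖X‖ ≤ ‖Matrix.fromCols X Y‖ := by
  refine norm_le_of_bound _ (norm_nonneg _) fun v => ?_
  have hmv : X *ᵥ (WithLp.equiv 2 (n → ℂ)) v
      = Matrix.fromCols X Y *ᵥ Sum.elim ((WithLp.equiv 2 (n → ℂ)) v) 0 := by
    rw [Matrix.fromCols_mulVec_sumElim, Matrix.mulVec_zero, add_zero]
  rw [hmv]
  calc ‖((WithLp.equiv 2 (m → ℂ)).symm
        (Matrix.fromCols X Y *ᵥ Sum.elim ((WithLp.equiv 2 (n → ℂ)) v) 0) : EuclideanSpace ℂ m)‖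
      ≤ ‖Matrix.fromCols X Y‖ * ‖((WithLp.equiv 2 ((n ⊕ n₂) → ℂ)).symm
          (Sum.elim ((WithLp.equiv 2 (n → ℂ)) v) 0) : EuclideanSpace ℂ (n ⊕ n₂))‖ :=
        Matrix.l2_opNorm_mulVec (Matrix.fromCols X Y) ((WithLp.equiv 2 ((n ⊕ n₂) → ℂ)).symm
          (Sum.elim ((WithLp.equiv 2 (n → ℂ)) v) 0))
    _ = ‖Matrix.fromCols X Y‖ * ‖v‖ := by rw [elim_norm_left]

lemma norm_right_le_fromColumns {n₂ : Type*} [Fintype n₂] [DecidableEq n₂]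
    (X : Matrix m n ℂ) (Y : Matrix m n₂ ℂ) :
    ‖Y‖ ≤ ‖Matrix.fromCols X Y‖ := by
  refine norm_le_of_bound _ (norm_nonneg _) fun v => ?_
  have hmv : Y *ᵥ (WithLp.equiv 2 (n₂ → ℂ)) v
      = Matrix.fromCols X Y *ᵥ Sum.elim 0 ((WithLp.equiv 2 (n₂ → ℂ)) v) := by
    rw [Matrix.fromCols_mulVec_sumElim, Matrix.mulVec_zero, zero_add]
  rw [hmv]
  calc ‖((WithLp.equiv 2 (m → ℂ)).symm
        (Matrix.fromCols X Y *ᵥ Sum.elim 0 ((WithLp.equiv 2 (n₂ → ℂ)) v)) : EuclideanSpace ℂ m)‖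
      ≤ ‖Matrix.fromCols X Y‖ * ‖((WithLp.equiv 2 ((n ⊕ n₂) → ℂ)).symm
          (Sum.elim 0 ((WithLp.equiv 2 (n₂ → ℂ)) v)) : EuclideanSpace ℂ (n ⊕ n₂))‖ :=
        Matrix.l2_opNorm_mulVec (Matrix.fromCols X Y) ((WithLp.equiv 2 ((n ⊕ n₂) → ℂ)).symm
          (Sum.elim 0 ((WithLp.equiv 2 (n₂ → ℂ)) v)))
    _ = ‖Matrix.fromCols X Y‖ * ‖v‖ := by rw [elim_norm_right]

lemma fromColumns_sub {n₂ : Type*} (X X' : Matrix m n ℂ) (Y Y' : Matrix m n₂ ℂ) :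
    Matrix.fromCols X Y - Matrix.fromCols X' Y'
      = Matrix.fromCols (X - X') (Y - Y') := by
  ext i j
  cases j <;> simp [Matrix.fromCols]

lemma inv_perturb {M E : Matrix n n ℂ} {R ε : ℝ} (hM : IsUnit M) (hMinv : ‖M⁻¹‖ ≤ R)
    (hE : ‖E‖ ≤ ε) (hRe : R * ε ≤ 1/2) :
    IsUnit (M - E) ∧ ‖(M - E)⁻¹‖ ≤ 2*R ∧ ‖(M - E)⁻¹ - M⁻¹‖ ≤ 2*R^2*ε := by
  have hR0 : 0 ≤ R := le_trans (norm_nonneg _) hMinv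
  have hε0 : 0 ≤ ε := le_trans (norm_nonneg _) hE
  have hMd : IsUnit M.det := (Matrix.isUnit_iff_isUnit_det M).mp hM
  have hX : ‖M⁻¹ * E‖ ≤ R * ε := by
    calc ‖M⁻¹ * E‖ ≤ ‖M⁻¹‖ * ‖E‖ := Matrix.l2_opNorm_mul _ _
      _ ≤ R * ε := mul_le_mul hMinv hE (norm_nonneg _) hR0
  have hXlt : ‖M⁻¹ * E‖ < 1 := lt_of_le_of_lt (le_trans hX hRe) (by norm_num)
  have hu : IsUnit (1 - M⁻¹ * E) := (Units.oneSub (M⁻¹ * E) hXlt).isUnit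
  have hud : IsUnit (1 - M⁻¹ * E).det := (Matrix.isUnit_iff_isUnit_det _).mp hu
  have hfac : M - E = M * (1 - M⁻¹ * E) := by
    rw [mul_sub, mul_one, ← mul_assoc, Matrix.mul_nonsing_inv M hMd, one_mul]
  have hunit : IsUnit (M - E) := hfac ▸ hM.mul hu
  have hd : IsUnit (M - E).det := (Matrix.isUnit_iff_isUnit_det _).mp hunit
  have hinv : (M - E)⁻¹ = (1 - M⁻¹ * E)⁻¹ * M⁻¹ := by rw [hfac, Matrix.mul_inv_rev]
  set Y := (1 - M⁻¹ * E)⁻¹ with hYdef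
  have hYid : Y = 1 + Y * (M⁻¹ * E) := by
    have h1 : Y * (1 - M⁻¹ * E) = 1 := Matrix.nonsing_inv_mul _ hud
    rw [mul_sub, mul_one] at h1
    rw [← h1]; abel
  have hY2 : ‖Y‖ ≤ 2 := by
    have h1 : ‖Y‖ ≤ ‖(1 : Matrix n n ℂ)‖ + ‖Y * (M⁻¹ * E)‖ := by
      conv_lhs => rw [hYid]
      exact norm_add_le _ _
    have h2 : ‖Y * (M⁻¹ * E)‖ ≤ ‖Y‖ * (1/2) := by
      calc ‖Y * (M⁻¹ * E)‖ ≤ ‖Y‖ * ‖M⁻¹ * E‖ := Matrix.l2_opNorm_mul _ _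
        _ ≤ ‖Y‖ * (1/2) := mul_le_mul_of_nonneg_left (le_trans hX hRe) (norm_nonneg _)
    have h3 := norm_one_le (n := n)
    nlinarith [norm_nonneg Y]
  have hinvnorm : ‖(M - E)⁻¹‖ ≤ 2 * R := by
    rw [hinv]
    calc ‖Y * M⁻¹‖ ≤ ‖Y‖ * ‖M⁻¹‖ := Matrix.l2_opNorm_mul _ _
      _ ≤ 2 * R := mul_le_mul hY2 hMinv (norm_nonneg _) (by norm_num)
  refine ⟨hunit, hinvnorm, ?_⟩
  have hdiff : (M - E)⁻¹ - M⁻¹ = (M - E)⁻¹ * E * M⁻¹ := by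
    have e1 : (M - E)⁻¹ * E * M⁻¹
        = (M - E)⁻¹ * (M * M⁻¹) - ((M - E)⁻¹ * (M - E)) * M⁻¹ := by noncomm_ring
    rw [e1, Matrix.mul_nonsing_inv M hMd, Matrix.nonsing_inv_mul _ hd, mul_one, one_mul]
  rw [hdiff]
  calc ‖(M - E)⁻¹ * E * M⁻¹‖ ≤ ‖(M - E)⁻¹ * E‖ * ‖M⁻¹‖ := Matrix.l2_opNorm_mul _ _
    _ ≤ ‖(M - E)⁻¹‖ * ‖E‖ * ‖M⁻¹‖ :=
        mul_le_mul_of_nonneg_right (Matrix.l2_opNorm_mul _ _) (norm_nonneg _)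
    _ ≤ (2*R) * ε * R := by
        have h1 : ‖(M - E)⁻¹‖ * ‖E‖ ≤ (2*R) * ε :=
          mul_le_mul hinvnorm hE (norm_nonneg _) (by nlinarith)
        exact mul_le_mul h1 hMinv (norm_nonneg _) (by nlinarith)
    _ = 2*R^2*ε := by ring

lemma term_bound {d p : ℕ} {G1 G2 : Matrix (Fin d) (Fin p) ℂ} {U : Matrix (Fin p) (Fin p) ℂ}
    {g δ t : ℝ} (hG1 : ‖G1‖ ≤ g) (hD : ‖G2 - G1‖ ≤ δ) (hUn : ‖U‖ ≤ t)
    (hg : 0 ≤ g) (hδ : 0 ≤ δ) (ht : 0 ≤ t) :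
    ‖G2 * U * G2ᴴ - G1 * U * G1ᴴ‖ ≤ t * (δ * (2*g + δ)) := by
  have hG2 : ‖G2‖ ≤ g + δ := by
    calc ‖G2‖ = ‖G1 + (G2 - G1)‖ := by rw [add_sub_cancel]
      _ ≤ ‖G1‖ + ‖G2 - G1‖ := norm_add_le _ _
      _ ≤ g + δ := add_le_add hG1 hD
  have hsplit : G2 * U * G2ᴴ - G1 * U * G1ᴴ
      = (G2 - G1) * U * G2ᴴ + G1 * U * (G2 - G1)ᴴ := by
    rw [Matrix.conjTranspose_sub]
    simp only [Matrix.sub_mul, Matrix.mul_sub]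
    abel
  rw [hsplit]
  have h1 : ‖(G2 - G1) * U * G2ᴴ‖ ≤ δ * t * (g + δ) := by
    calc ‖(G2 - G1) * U * G2ᴴ‖ ≤ ‖(G2 - G1) * U‖ * ‖G2ᴴ‖ := Matrix.l2_opNorm_mul _ _
      _ ≤ ‖G2 - G1‖ * ‖U‖ * ‖G2ᴴ‖ :=
          mul_le_mul_of_nonneg_right (Matrix.l2_opNorm_mul _ _) (norm_nonneg _)
      _ ≤ δ * t * (g + δ) := by
          rw [Matrix.l2_opNorm_conjTranspose]
          exact mul_le_mul (mul_le_mul hD hUn (norm_nonneg _) hδ) hG2 (norm_nonneg _)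
            (by positivity)
  have h2 : ‖G1 * U * (G2 - G1)ᴴ‖ ≤ g * t * δ := by
    calc ‖G1 * U * (G2 - G1)ᴴ‖ ≤ ‖G1 * U‖ * ‖(G2 - G1)ᴴ‖ := Matrix.l2_opNorm_mul _ _
      _ ≤ ‖G1‖ * ‖U‖ * ‖(G2 - G1)ᴴ‖ :=
          mul_le_mul_of_nonneg_right (Matrix.l2_opNorm_mul _ _) (norm_nonneg _)
      _ ≤ g * t * δ := by
          rw [Matrix.l2_opNorm_conjTranspose]
          exact mul_le_mul (mul_le_mul hG1 hUn (norm_nonneg _) hg) hD (norm_nonneg _)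
            (by positivity)
  calc ‖(G2 - G1) * U * G2ᴴ + G1 * U * (G2 - G1)ᴴ‖
      ≤ ‖(G2 - G1) * U * G2ᴴ‖ + ‖G1 * U * (G2 - G1)ᴴ‖ := norm_add_le _ _
    _ ≤ δ * t * (g + δ) + g * t * δ := add_le_add h1 h2
    _ = t * (δ * (2*g + δ)) := by ring

lemma isUnit_shift {d : ℕ} (A : Matrix (Fin d) (Fin d) ℂ) {R : ℝ} (hRpos : 0 < R)
    (hR : ∀ ω : ℝ,
      ‖((Complex.exp ((ω : ℂ) * Complex.I) • (1 : Matrix (Fin d) (Fin d) ℂ) - A)⁻¹)‖ ≤ R)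
    (ω₀ : ℝ) :
    IsUnit (Complex.exp ((ω₀ : ℂ) * Complex.I) • (1 : Matrix (Fin d) (Fin d) ℂ) - A) := by
  by_contra hM
  set M := Complex.exp ((ω₀ : ℂ) * Complex.I) • (1 : Matrix (Fin d) (Fin d) ℂ) - A with hMdef
  have hdet : M.det = 0 := by
    by_contra h
    exact hM ((Matrix.isUnit_iff_isUnit_det M).mpr (isUnit_iff_ne_zero.mpr h))
  obtain ⟨v, hv0, hMv⟩ := Matrix.exists_mulVec_eq_zero_iff.mpr hdet
  set δ := min (1/(2*R)) 1 with hδdef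
  have hδpos : 0 < δ := lt_min (by positivity) one_pos
  have hδle : δ ≤ 1/(2*R) := min_le_left _ _
  have hδ1 : δ ≤ 1 := min_le_right _ _
  -- injectivity of ω ↦ exp(ωI) on a short interval
  have hinj : Set.InjOn (fun ω : ℝ => Complex.exp ((ω : ℂ) * Complex.I))
      (Set.Ioo ω₀ (ω₀ + δ)) := by
    intro a ha b hb hab
    obtain ⟨nn, hn⟩ := Complex.exp_eq_exp_iff_exists_int.mp hab
    have him : a = b + nn * (2 * Real.pi) := by
      have := congrArg Complex.im hn
      simpa [Complex.add_im, Complex.mul_im, Complex.ofReal_re, Complex.ofReal_im,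
        Complex.I_re, Complex.I_im] using this
    have habs : |a - b| < 1 := by
      rw [abs_sub_lt_iff]
      cases' ha with ha1 ha2; cases' hb with hb1 hb2
      constructor <;> nlinarith
    have hn0 : nn = 0 := by
      by_contra hnn
      have h1 : (1:ℝ) ≤ |(nn:ℝ)| := by
        rw [← Int.cast_abs, ← Int.cast_one, Int.cast_le]
        exact Int.one_le_abs hnn
      have h2 : |a - b| = |(nn:ℝ)| * (2 * Real.pi) := by
        rw [him]
        have h3 : b + (nn:ℝ) * (2 * Real.pi) - b = (nn:ℝ) * (2 * Real.pi) := by ring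
        rw [h3, abs_mul, abs_of_nonneg (by positivity : (0:ℝ) ≤ 2 * Real.pi)]
      nlinarith [Real.pi_gt_three]
    rw [hn0] at him; simpa using him
  have hfin : Set.Finite {ω | ω ∈ Set.Ioo ω₀ (ω₀ + δ)
      ∧ Complex.exp ((ω:ℂ) * Complex.I) ∈ spectrum ℂ A} := by
    apply Set.Finite.of_finite_image
      (f := fun ω : ℝ => Complex.exp ((ω:ℂ) * Complex.I))
    · refine (A.finite_spectrum).subset ?_
      rintro z ⟨ω, ⟨-, hω⟩, rfl⟩
      exact hω
    · exact hinj.mono fun ω hω => hω.1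
  have hex : ∃ ω ∈ Set.Ioo ω₀ (ω₀ + δ),
      Complex.exp ((ω:ℂ) * Complex.I) ∉ spectrum ℂ A := by
    have hinf : (Set.Ioo ω₀ (ω₀ + δ)).Infinite := Set.Ioo_infinite (by linarith)
    obtain ⟨ω, hω⟩ := (hinf.diff hfin).nonempty
    exact ⟨ω, hω.1, fun hs => hω.2 ⟨hω.1, hs⟩⟩
  obtain ⟨ω, hωI, hωs⟩ := hex
  have hNunit : IsUnit
      (Complex.exp ((ω:ℂ) * Complex.I) • (1 : Matrix (Fin d) (Fin d) ℂ) - A) := by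
    have := spectrum.notMem_iff.mp hωs
    rwa [Algebra.algebraMap_eq_smul_one] at this
  set N := Complex.exp ((ω:ℂ) * Complex.I) • (1 : Matrix (Fin d) (Fin d) ℂ) - A with hNdef
  have hNd : IsUnit N.det := (Matrix.isUnit_iff_isUnit_det N).mp hNunit
  set c : ℂ := Complex.exp ((ω:ℂ) * Complex.I) - Complex.exp ((ω₀:ℂ) * Complex.I) with hcdef
  have hNM : N = M + c • (1 : Matrix (Fin d) (Fin d) ℂ) := by
    rw [hNdef, hMdef, hcdef, sub_smul]; abel
  have hNv : N *ᵥ v = c • v := by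
    rw [hNM, Matrix.add_mulVec, hMv, zero_add, Matrix.smul_mulVec, Matrix.one_mulVec]
  have hvinv : v = c • (N⁻¹ *ᵥ v) := by
    have h1 : N⁻¹ *ᵥ (N *ᵥ v) = v := by
      rw [Matrix.mulVec_mulVec, Matrix.nonsing_inv_mul N hNd, Matrix.one_mulVec]
    have h2 := h1.symm
    rw [hNv, Matrix.mulVec_smul] at h2
    exact h2
  set x : EuclideanSpace ℂ (Fin d) := (WithLp.equiv 2 (Fin d → ℂ)).symm v with hxdef
  have hx0 : 0 < ‖x‖ := by
    rw [norm_pos_iff]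
    intro h
    apply hv0
    have := congrArg (WithLp.equiv 2 (Fin d → ℂ)) h
    simpa [hxdef] using this
  have hmv : ‖((WithLp.equiv 2 (Fin d → ℂ)).symm (N⁻¹ *ᵥ v) : EuclideanSpace ℂ (Fin d))‖
      ≤ R * ‖x‖ :=
    le_trans (Matrix.l2_opNorm_mulVec N⁻¹ x)
      (mul_le_mul_of_nonneg_right (hR ω) (norm_nonneg _))
  have hkey : ‖x‖ ≤ ‖c‖ * (R * ‖x‖) := by
    calc ‖x‖ = ‖((WithLp.equiv 2 (Fin d → ℂ)).symm (c • (N⁻¹ *ᵥ v)) :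
          EuclideanSpace ℂ (Fin d))‖ := by rw [hxdef, ← hvinv]
      _ = ‖c‖ * ‖((WithLp.equiv 2 (Fin d → ℂ)).symm (N⁻¹ *ᵥ v) :
          EuclideanSpace ℂ (Fin d))‖ := by rw [← norm_smul]; rfl
      _ ≤ ‖c‖ * (R * ‖x‖) := mul_le_mul_of_nonneg_left hmv (norm_nonneg c)
  have hcle : ‖c‖ < 1/R := by
    have h1 : ‖c‖ ≤ |ω - ω₀| := exp_I_sub_le ω ω₀
    have h2 : |ω - ω₀| < δ := by
      rw [abs_of_pos (by linarith [hωI.1])]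
      linarith [hωI.2]
    have h3 : (1:ℝ)/(2*R) < 1/R := by
      rw [div_lt_div_iff₀ (by positivity) hRpos]
      nlinarith
    linarith
  have hcR : ‖c‖ * R < 1 := (lt_div_iff₀ hRpos).mp hcle
  nlinarith [mul_lt_mul_of_pos_right hcR hx0, hkey, norm_nonneg c]

end FreqAux

/-- perturbation bound for frequency-domain Gramians. Here `R` bounds
`‖(e^{iω}I − A)⁻¹‖_op` for all `ω` (in particular the max over `[0, 2π]`), `ε ≤ (2R)⁻¹`,
the `U_ℓ` are PSD with `Σ_ℓ tr(U_ℓ) ≤ k²γ²`, and `G_ℓ = (e^{iω_ℓ}I − A)⁻¹ B` (resp. `Ĝ_ℓ`)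
with `ω_ℓ = 2πℓ/k`. Then
`(1/k)‖Σ_ℓ Ĝ_ℓ U_ℓ Ĝ_ℓᴴ − Σ_ℓ G_ℓ U_ℓ G_ℓᴴ‖_op ≤ C₁ε + C₂ε² + C₃ε³` with
`C₁ = kγ²R²‖B‖(16R‖B‖+2)`, `C₂ = kγ²R²(32R‖B‖+2)`, `C₃ = 16kγ²R³`. -/
theorem freq_gramian_perturbation {d p : ℕ}
    (A Ahat : Matrix (Fin d) (Fin d) ℂ) (B Bhat : Matrix (Fin d) (Fin p) ℂ)
    (k : ℕ) (hk : 0 < k) (γ ε R : ℝ)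
    (U : Fin k → Matrix (Fin p) (Fin p) ℂ) (hU : ∀ ℓ, (U ℓ).PosSemidef)
    (htr : (∑ ℓ, (U ℓ).trace).re ≤ (k : ℝ) ^ 2 * γ ^ 2)
    (hR : ∀ ω : ℝ, opNorm
      ((Complex.exp ((ω : ℂ) * Complex.I) • (1 : Matrix (Fin d) (Fin d) ℂ) - A)⁻¹) ≤ R)
    (hε : ε ≤ (2 * R)⁻¹)
    (hpert : opNorm (Matrix.fromCols Ahat Bhat - Matrix.fromCols A B) ≤ ε)
    (G Ghat : Fin k → Matrix (Fin d) (Fin p) ℂ)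
    (hG : ∀ ℓ : Fin k, G ℓ =
      (Complex.exp (((2 * Real.pi * ((ℓ : ℕ) + 1) / k : ℝ) : ℂ) * Complex.I) • 1 - A)⁻¹ * B)
    (hGhat : ∀ ℓ : Fin k, Ghat ℓ =
      (Complex.exp (((2 * Real.pi * ((ℓ : ℕ) + 1) / k : ℝ) : ℂ) * Complex.I) • 1 - Ahat)⁻¹
        * Bhat) :
    (1 / (k : ℝ)) * opNorm (∑ ℓ, Ghat ℓ * U ℓ * (Ghat ℓ)ᴴ - ∑ ℓ, G ℓ * U ℓ * (G ℓ)ᴴ)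
      ≤ (k * γ ^ 2 * R ^ 2 * opNorm B * (16 * R * opNorm B + 2)) * ε
        + (k * γ ^ 2 * R ^ 2 * (32 * R * opNorm B + 2)) * ε ^ 2
        + (16 * k * γ ^ 2 * R ^ 3) * ε ^ 3 := by
  simp only [FreqAux.opNorm_eq] at hR hpert ⊢
  set b := ‖B‖ with hbdef
  have hb0 : 0 ≤ b := norm_nonneg _
  have hε0 : 0 ≤ ε := le_trans (norm_nonneg _) hpert
  have hR0 : 0 ≤ R := le_trans (norm_nonneg _) (hR 0)
  have hAB : ‖Ahat - A‖ ≤ ε ∧ ‖Bhat - B‖ ≤ ε := by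
    have hps : ‖Matrix.fromCols (Ahat - A) (Bhat - B)‖ ≤ ε := by
      rwa [← FreqAux.fromColumns_sub]
    exact ⟨le_trans (FreqAux.norm_left_le_fromColumns _ _) hps,
      le_trans (FreqAux.norm_right_le_fromColumns _ _) hps⟩
  rcases hR0.eq_or_lt with hReq | hRpos
  · -- degenerate case R = 0, forcing ε = 0
    have hε' : ε = 0 := by
      have h1 : ε ≤ 0 := by rw [← hReq] at hε; simpa using hε
      linarith
    have hA' : Ahat = A := by
      have h1 := hAB.1
      rw [hε'] at h1
      exact sub_eq_zero.mp (norm_le_zero_iff.mp h1)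
    have hB' : Bhat = B := by
      have h1 := hAB.2
      rw [hε'] at h1
      exact sub_eq_zero.mp (norm_le_zero_iff.mp h1)
    have hGG : (∑ ℓ, Ghat ℓ * U ℓ * (Ghat ℓ)ᴴ) = ∑ ℓ, G ℓ * U ℓ * (G ℓ)ᴴ :=
      Finset.sum_congr rfl fun ℓ _ => by rw [hGhat ℓ, hG ℓ, hA', hB']
    rw [hGG, sub_self, norm_zero, mul_zero, hε']
    norm_num
  · -- main case R > 0
    have hRe : R * ε ≤ 1/2 := by
      calc R * ε ≤ R * (2*R)⁻¹ := mul_le_mul_of_nonneg_left hε hR0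
        _ = 1/2 := by field_simp
    set δ := 2*R^2*b*ε + 2*R^2*ε^2 + R*ε with hδdef
    have hδ0 : 0 ≤ δ := by positivity
    have hg0 : 0 ≤ R * b := by positivity
    set C := δ * (2*(R*b) + δ) with hCdef
    have hC0 : 0 ≤ C := by positivity
    have hterm : ∀ ℓ : Fin k, ‖Ghat ℓ * U ℓ * (Ghat ℓ)ᴴ - G ℓ * U ℓ * (G ℓ)ᴴ‖
        ≤ (U ℓ).trace.re * C := by
      intro ℓ
      set θ : ℝ := 2 * Real.pi * ((ℓ : ℕ) + 1) / k with hθdef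
      set M := Complex.exp ((θ:ℂ) * Complex.I) • (1 : Matrix (Fin d) (Fin d) ℂ) - A with hMdef
      have hMunit : IsUnit M := FreqAux.isUnit_shift A hRpos hR θ
      have hMinv : ‖M⁻¹‖ ≤ R := hR θ
      have hME : M - (Ahat - A)
          = Complex.exp ((θ:ℂ) * Complex.I) • (1 : Matrix (Fin d) (Fin d) ℂ) - Ahat := by
        rw [hMdef]; abel
      obtain ⟨hunit2, hinv2, hdiff2⟩ := FreqAux.inv_perturb hMunit hMinv hAB.1 hRe
      rw [hME] at hunit2 hinv2 hdiff2
      have hGl : G ℓ = M⁻¹ * B := hG ℓ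
      have hGhatl : Ghat ℓ
          = (Complex.exp ((θ:ℂ) * Complex.I) • (1 : Matrix (Fin d) (Fin d) ℂ) - Ahat)⁻¹ * Bhat :=
        hGhat ℓ
      set Phat := (Complex.exp ((θ:ℂ) * Complex.I) • (1 : Matrix (Fin d) (Fin d) ℂ) - Ahat)⁻¹
        with hPhatdef
      have hD : ‖Ghat ℓ - G ℓ‖ ≤ δ := by
        have hsplit : Ghat ℓ - G ℓ
            = (Phat - M⁻¹) * B + (Phat - M⁻¹) * (Bhat - B) + M⁻¹ * (Bhat - B) := by
          rw [hGl, hGhatl]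
          simp only [Matrix.sub_mul, Matrix.mul_sub]
          abel
        rw [hsplit]
        have h1 : ‖(Phat - M⁻¹) * B‖ ≤ 2*R^2*ε * b :=
          le_trans (Matrix.l2_opNorm_mul _ _)
            (mul_le_mul hdiff2 le_rfl hb0 (by positivity))
        have h2 : ‖(Phat - M⁻¹) * (Bhat - B)‖ ≤ 2*R^2*ε * ε :=
          le_trans (Matrix.l2_opNorm_mul _ _)
            (mul_le_mul hdiff2 hAB.2 (norm_nonneg _) (by positivity))
        have h3 : ‖M⁻¹ * (Bhat - B)‖ ≤ R * ε :=
          le_trans (Matrix.l2_opNorm_mul _ _)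
            (mul_le_mul hMinv hAB.2 (norm_nonneg _) hR0)
        calc ‖(Phat - M⁻¹) * B + (Phat - M⁻¹) * (Bhat - B) + M⁻¹ * (Bhat - B)‖
            ≤ ‖(Phat - M⁻¹) * B + (Phat - M⁻¹) * (Bhat - B)‖ + ‖M⁻¹ * (Bhat - B)‖ :=
              norm_add_le _ _
          _ ≤ ‖(Phat - M⁻¹) * B‖ + ‖(Phat - M⁻¹) * (Bhat - B)‖ + ‖M⁻¹ * (Bhat - B)‖ :=
              add_le_add_left (norm_add_le _ _) _
          _ ≤ 2*R^2*ε * b + 2*R^2*ε * ε + R * ε := by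
              exact add_le_add (add_le_add h1 h2) h3
          _ = δ := by rw [hδdef]; ring
      have hG1 : ‖G ℓ‖ ≤ R * b := by
        rw [hGl]
        exact le_trans (Matrix.l2_opNorm_mul _ _) (mul_le_mul hMinv le_rfl hb0 hR0)
      have hUb := FreqAux.psd_norm_le (hU ℓ)
      exact FreqAux.term_bound hG1 hD hUb.1 hg0 hδ0 hUb.2
    have hsum : ‖∑ ℓ, Ghat ℓ * U ℓ * (Ghat ℓ)ᴴ - ∑ ℓ, G ℓ * U ℓ * (G ℓ)ᴴ‖
        ≤ (k:ℝ)^2 * γ^2 * C := by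
      rw [← Finset.sum_sub_distrib]
      calc ‖∑ ℓ, (Ghat ℓ * U ℓ * (Ghat ℓ)ᴴ - G ℓ * U ℓ * (G ℓ)ᴴ)‖
          ≤ ∑ ℓ, ‖Ghat ℓ * U ℓ * (Ghat ℓ)ᴴ - G ℓ * U ℓ * (G ℓ)ᴴ‖ := norm_sum_le _ _
        _ ≤ ∑ ℓ, (U ℓ).trace.re * C := Finset.sum_le_sum fun ℓ _ => hterm ℓ
        _ = (∑ ℓ, (U ℓ).trace.re) * C := by rw [← Finset.sum_mul]
        _ ≤ (k:ℝ)^2 * γ^2 * C := by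
            refine mul_le_mul_of_nonneg_right ?_ hC0
            rw [← Complex.re_sum]
            exact htr
    have hk1 : (1:ℝ) ≤ (k:ℝ) := by exact_mod_cast hk
    have hkpos : (0:ℝ) < (k:ℝ) := by linarith
    have hfinal : (1 / (k:ℝ)) * ‖∑ ℓ, Ghat ℓ * U ℓ * (Ghat ℓ)ᴴ - ∑ ℓ, G ℓ * U ℓ * (G ℓ)ᴴ‖
        ≤ (k:ℝ) * γ^2 * C := by
      calc (1 / (k:ℝ)) * ‖∑ ℓ, Ghat ℓ * U ℓ * (Ghat ℓ)ᴴ - ∑ ℓ, G ℓ * U ℓ * (G ℓ)ᴴ‖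
          ≤ (1 / (k:ℝ)) * ((k:ℝ)^2 * γ^2 * C) :=
            mul_le_mul_of_nonneg_left hsum (by positivity)
        _ = (k:ℝ) * γ^2 * C := by field_simp
    refine le_trans hfinal ?_
    have hpoly : C ≤ R^2*b*(16*R*b+2)*ε + R^2*(32*R*b+2)*ε^2 + 16*R^3*ε^3 := by
      rw [hCdef, hδdef]
      have h12 : 0 ≤ 1/2 - R*ε := by linarith
      nlinarith [mul_nonneg h12 (by positivity : (0:ℝ) ≤ R^3*ε^3),
        mul_nonneg h12 (by positivity : (0:ℝ) ≤ R^3*b*ε^2),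
        mul_nonneg h12 (by positivity : (0:ℝ) ≤ R^3*b^2*ε),
        (by positivity : (0:ℝ) ≤ R^2*ε^2),
        (by positivity : (0:ℝ) ≤ R^3*ε^3),
        (by positivity : (0:ℝ) ≤ R^3*b*ε^2),
        (by positivity : (0:ℝ) ≤ R^3*b^2*ε)]
    calc (k:ℝ) * γ^2 * C
        ≤ (k:ℝ) * γ^2 * (R^2*b*(16*R*b+2)*ε + R^2*(32*R*b+2)*ε^2 + 16*R^3*ε^3) :=
          mul_le_mul_of_nonneg_left hpoly (by positivity)
      _ = ((k:ℝ) * γ ^ 2 * R ^ 2 * b * (16 * R * b + 2)) * ε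
          + ((k:ℝ) * γ ^ 2 * R ^ 2 * (32 * R * b + 2)) * ε ^ 2
          + (16 * (k:ℝ) * γ ^ 2 * R ^ 3) * ε ^ 3 := by ring
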